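/- Excess risk decomposition under the margin condition: Let (x, y) be a random couple taking values in X × {0,1} for a measurable space X, with joint distribution P, marginal P_x, regression function eta(x) = P(y = 1 | x), Bayes rule f*(x) = 1{eta(x) ≥ 1/2}, and misclassification risk R(g) = P(y ≠ g(x)). Assume the margin condition: there exist c_M > 0 and gamma ≥ 0 such that P_x( 0 < |eta(x) − 1/2| ≤ t ) ≤ c_M·t^gamma for all t > 0. Then for every measurable eta_theta : X → R with plug-in rule f_theta(x) = 1{eta_theta(x) ≥ 1/2} and every delta > 0, R(f_theta) − R(f*) ≤ 2·c_M·delta^{1+gamma} + 2·E_x[ |eta_theta(x) − eta(x)| · 1{ |eta_theta(x) − eta(x)| > delta } ]. -/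

import Mathlib

open MeasureTheory Real
open scoped Classical

noncomputable section

variable {X : Type*} [MeasurableSpace X]

/-- The misclassification risk `R(g) = P(y ≠ g(x))` of a binary classifier
`g : X → Bool` with respect to a joint distribution `P` on `X × {0,1}`. -/
def misclassRisk (P : Measure (X × Bool)) (g : X → Bool) : ℝ :=
  (P {p : X × Bool | p.2 ≠ g p.1}).toReal

/-- The plug-in classifier `x ↦ 1{η(x) ≥ 1/2}` of a function `η : X → ℝ`. -/
def plugIn (η : X → ℝ) : X → Bool :=
  fun x => if 1 / 2 ≤ η x then true else false

/-- `η` is the regression function `η(x) = P(y = 1 | x)` of the joint distribution `P`: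
for every measurable `A ⊆ X`, `P(A × {1}) = ∫_A η dP_x` where `P_x` is the marginal. -/
def IsRegressionFunction (P : Measure (X × Bool)) (η : X → ℝ) : Prop :=
  Measurable η ∧ (∀ x, 0 ≤ η x) ∧ (∀ x, η x ≤ 1) ∧
    ∀ A : Set X, MeasurableSet A →
      (P (A ×ˢ ({true} : Set Bool))).toReal = ∫ x in A, η x ∂P.fst


lemma eta_int {η : X → ℝ} (μ : Measure X) [IsProbabilityMeasure μ]
    (hm : Measurable η) (h0 : ∀ x, 0 ≤ η x) (h1 : ∀ x, η x ≤ 1) :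
    Integrable η μ := by
  apply Integrable.mono' (integrable_const 1) hm.aestronglyMeasurable
  filter_upwards with x
  rw [Real.norm_eq_abs, abs_le]; constructor <;> [linarith [h0 x]; exact h1 x]


lemma risk_formula (P : Measure (X × Bool)) [IsProbabilityMeasure P]
    (η : X → ℝ) (hη : IsRegressionFunction P η)
    (g : X → Bool) (hg : MeasurableSet {x | g x = true}) :
    misclassRisk P g = ∫ x, (if g x then 1 - η x else η x) ∂P.fst := by
  obtain ⟨hm, h0, h1, hreg⟩ := hη
  set A : Set X := {x | g x = true} with hA
  have hset : {p : X × Bool | p.2 ≠ g p.1} = (Aᶜ ×ˢ ({true} : Set Bool)) ∪ (A ×ˢ ({false} : Set Bool)) := by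
    ext ⟨x, b⟩
    simp only [Set.mem_setOf_eq, Set.mem_union, Set.mem_prod, Set.mem_compl_iff,
      Set.mem_singleton_iff, hA]
    cases b <;> cases hgx : g x <;> simp [hgx]
  have hdisj : Disjoint (Aᶜ ×ˢ ({true} : Set Bool)) (A ×ˢ ({false} : Set Bool)) := by
    apply Set.disjoint_left.2
    rintro ⟨x, b⟩ ⟨_, hb⟩ ⟨_, hb'⟩
    simp_all
  have hmeas1 : MeasurableSet ((A : Set X) ×ˢ ({false} : Set Bool)) :=
    hg.prod (measurableSet_singleton _)
  have hsplit : P.fst A = P (A ×ˢ ({true} : Set Bool)) + P (A ×ˢ ({false} : Set Bool)) := by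
    rw [Measure.fst_apply hg]
    have : (Prod.fst ⁻¹' A : Set (X × Bool)) = (A ×ˢ ({true} : Set Bool)) ∪ (A ×ˢ ({false} : Set Bool)) := by
      ext ⟨x, b⟩; cases b <;> simp
    rw [this, measure_union _ hmeas1]
    apply Set.disjoint_left.2
    rintro ⟨x, b⟩ ⟨_, hb⟩ ⟨_, hb'⟩
    simp_all
  have hηint : Integrable η P.fst := eta_int _ hm h0 h1
  have hrisk : misclassRisk P g
      = ∫ x in Aᶜ, η x ∂P.fst + ((P.fst A).toReal - ∫ x in A, η x ∂P.fst) := by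
    rw [misclassRisk, hset, measure_union hdisj hmeas1, ENNReal.toReal_add
      (measure_ne_top _ _) (measure_ne_top _ _), hreg Aᶜ hg.compl]
    have : (P (A ×ˢ ({false} : Set Bool))).toReal
        = (P.fst A).toReal - (P (A ×ˢ ({true} : Set Bool))).toReal := by
      rw [hsplit, ENNReal.toReal_add (measure_ne_top _ _) (measure_ne_top _ _)]
      ring
    rw [this, hreg A hg]
  rw [hrisk]
  have hcint : Integrable (fun x => if g x then 1 - η x else η x) P.fst := by
    apply eta_int _ (Measurable.ite hg (measurable_const.sub hm) hm)
    · intro x; split <;> [(simp only [Pi.sub_apply]; linarith [h1 x]); exact h0 x]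
    · intro x; split <;> [(simp only [Pi.sub_apply]; linarith [h0 x]); exact h1 x]
  rw [← integral_add_compl hg hcint]
  have e1 : ∫ x in A, (if g x then 1 - η x else η x) ∂P.fst = ∫ x in A, (1 - η x) ∂P.fst := by
    apply setIntegral_congr_fun hg
    intro x hx; simp only [hA, Set.mem_setOf_eq] at hx; simp [hx]
  have e2 : ∫ x in Aᶜ, (if g x then 1 - η x else η x) ∂P.fst = ∫ x in Aᶜ, η x ∂P.fst := by
    apply setIntegral_congr_fun hg.compl
    intro x hx; simp only [hA, Set.mem_compl_iff, Set.mem_setOf_eq] at hx; simp [hx]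
  rw [e1, e2]
  have e3 : ∫ x in A, (1 - η x) ∂P.fst = (P.fst A).toReal - ∫ x in A, η x ∂P.fst := by
    rw [integral_sub (integrable_const 1).integrableOn hηint.integrableOn]
    simp
    rfl
  rw [e3]; ring


/-- **Excess risk decomposition under the margin condition**: if
`P_x(0 < |η - 1/2| ≤ t) ≤ c_M t^γ` for all `t > 0`, then for every `δ > 0` the plug-in
rule `f_θ = 1{η_θ ≥ 1/2}` satisfies
`R(f_θ) - R(f*) ≤ 2 c_M δ^{1+γ} + 2 E_x[|η_θ - η| · 1{|η_θ - η| > δ}]`. -/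
theorem plugin_excess_risk_margin_decomposition
    (P : Measure (X × Bool)) [IsProbabilityMeasure P]
    (η : X → ℝ) (hη : IsRegressionFunction P η)
    (cM γ : ℝ) (hcM : 0 < cM) (hγ : 0 ≤ γ)
    (hmargin : ∀ t : ℝ, 0 < t →
      (P.fst {x | 0 < |η x - 1 / 2| ∧ |η x - 1 / 2| ≤ t}).toReal ≤ cM * t ^ γ)
    (ηθ : X → ℝ) (hηθ : Measurable ηθ)
    (δ : ℝ) (hδ : 0 < δ) :
    ENNReal.ofReal (misclassRisk P (plugIn ηθ) - misclassRisk P (plugIn η)) ≤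
      ENNReal.ofReal (2 * cM * δ ^ (1 + γ)) +
        2 * ∫⁻ x, ENNReal.ofReal
          (|ηθ x - η x| * (if δ < |ηθ x - η x| then 1 else 0)) ∂P.fst := by
  obtain ⟨hm, h0, h1, hreg⟩ := hη
  have hgA : MeasurableSet {x | plugIn ηθ x = true} := by
    have : {x | plugIn ηθ x = true} = {x | 1/2 ≤ ηθ x} := by
      ext x; simp [plugIn]
    rw [this]; exact measurableSet_le measurable_const hηθ
  have hgB : MeasurableSet {x | plugIn η x = true} := by
    have : {x | plugIn η x = true} = {x | 1/2 ≤ η x} := by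
      ext x; simp [plugIn]
    rw [this]; exact measurableSet_le measurable_const hm
  set D : X → ℝ := fun x => if plugIn ηθ x = plugIn η x then 0 else |2 * η x - 1| with hD
  -- pointwise identity
  have hpt : ∀ x, (if plugIn ηθ x then 1 - η x else η x) - (if plugIn η x then 1 - η x else η x)
      = D x := by
    intro x
    simp only [hD, plugIn]
    by_cases ha : 1/2 ≤ ηθ x <;> by_cases hb : 1/2 ≤ η x <;>
      simp only [ha, hb, if_true, if_false, reduceCtorEq, reduceIte]
    · simp
    · rw [abs_of_nonpos (by linarith)]; ring
    · rw [abs_of_nonneg (by linarith)]; ring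
    · simp
  have hcint1 : Integrable (fun x => if plugIn ηθ x then 1 - η x else η x) P.fst := by
    apply eta_int _ (Measurable.ite hgA (measurable_const.sub hm) hm)
    · intro x; split <;> [(simp only [Pi.sub_apply]; linarith [h1 x]); exact h0 x]
    · intro x; split <;> [(simp only [Pi.sub_apply]; linarith [h0 x]); exact h1 x]
  have hcint2 : Integrable (fun x => if plugIn η x then 1 - η x else η x) P.fst := by
    apply eta_int _ (Measurable.ite hgB (measurable_const.sub hm) hm)
    · intro x; split <;> [(simp only [Pi.sub_apply]; linarith [h1 x]); exact h0 x]
    · intro x; split <;> [(simp only [Pi.sub_apply]; linarith [h0 x]); exact h1 x]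
  have hDint : Integrable D P.fst := by
    apply (hcint1.sub hcint2).congr
    filter_upwards with x using hpt x
  have hexcess : misclassRisk P (plugIn ηθ) - misclassRisk P (plugIn η) = ∫ x, D x ∂P.fst := by
    rw [risk_formula P η ⟨hm, h0, h1, hreg⟩ _ hgA, risk_formula P η ⟨hm, h0, h1, hreg⟩ _ hgB,
      ← integral_sub hcint1 hcint2]
    exact integral_congr_ae (Filter.Eventually.of_forall hpt)
  have hDnn : 0 ≤ᵐ[P.fst] D := Filter.Eventually.of_forall fun x => by
    simp only [hD, Pi.zero_apply]; split
    · exact le_rfl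
    · exact abs_nonneg _
  rw [hexcess, MeasureTheory.ofReal_integral_eq_lintegral_ofReal hDint hDnn]
  set S : Set X := {x | 0 < |η x - 1/2| ∧ |η x - 1/2| ≤ δ} with hS
  have hSmeas : MeasurableSet S := by
    have h1m : Measurable fun x => |η x - 1/2| := (hm.sub measurable_const).abs
    exact (measurableSet_lt measurable_const h1m).inter (measurableSet_le h1m measurable_const)
  set t2 : X → ℝ := fun x => |ηθ x - η x| * (if δ < |ηθ x - η x| then 1 else 0) with ht2
  have hbound : ∀ x, ENNReal.ofReal (D x) ≤
      S.indicator (fun _ => ENNReal.ofReal (2 * δ)) x + ENNReal.ofReal (2 * t2 x) := by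
    intro x
    by_cases h : plugIn ηθ x = plugIn η x
    · simp only [hD, if_pos h, ENNReal.ofReal_zero]
      exact zero_le
    · have hkey : |η x - 1/2| ≤ |ηθ x - η x| := by
        by_cases ha : 1/2 ≤ ηθ x <;> by_cases hb : 1/2 ≤ η x
        · exact absurd (show plugIn ηθ x = plugIn η x by
            unfold plugIn; rw [if_pos ha, if_pos hb]) h
        · rw [abs_of_neg (show η x - 1/2 < 0 by linarith),
            abs_of_pos (show 0 < ηθ x - η x by linarith)]
          linarith
        · rw [abs_of_nonneg (show 0 ≤ η x - 1/2 by linarith),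
            abs_of_neg (show ηθ x - η x < 0 by linarith)]
          linarith
        · exact absurd (show plugIn ηθ x = plugIn η x by
            unfold plugIn; rw [if_neg ha, if_neg hb]) h
      have hD2 : D x = 2 * |η x - 1/2| := by
        rw [hD]
        simp only [if_neg h]
        rw [show 2 * η x - 1 = 2 * (η x - 1/2) by ring, abs_mul, abs_two]
      by_cases hcase : |η x - 1/2| ≤ δ
      · by_cases hpos : 0 < |η x - 1/2|
        · have hxS : x ∈ S := ⟨hpos, hcase⟩
          rw [Set.indicator_of_mem hxS]
          exact le_trans (ENNReal.ofReal_le_ofReal (by rw [hD2]; linarith))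
            (self_le_add_right _ _)
        · have h0' : |η x - 1/2| = 0 := le_antisymm (not_lt.1 hpos) (abs_nonneg _)
          rw [hD2, h0', mul_zero, ENNReal.ofReal_zero]
          exact zero_le
      · have hgt : δ < |ηθ x - η x| := lt_of_lt_of_le (not_le.1 hcase) hkey
        have ht2x : t2 x = |ηθ x - η x| := by rw [ht2]; simp [if_pos hgt]
        refine le_trans (ENNReal.ofReal_le_ofReal ?_) (le_add_self)
        rw [hD2, ht2x]
        linarith
  calc ∫⁻ x, ENNReal.ofReal (D x) ∂P.fst
      ≤ ∫⁻ x, (S.indicator (fun _ => ENNReal.ofReal (2 * δ)) x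
          + ENNReal.ofReal (2 * t2 x)) ∂P.fst := lintegral_mono hbound
    _ = ENNReal.ofReal (2 * δ) * P.fst S + ∫⁻ x, ENNReal.ofReal (2 * t2 x) ∂P.fst := by
        rw [lintegral_add_left (measurable_const.indicator hSmeas),
          lintegral_indicator hSmeas, setLIntegral_const]
    _ ≤ ENNReal.ofReal (2 * cM * δ ^ (1 + γ)) + 2 * ∫⁻ x, ENNReal.ofReal (t2 x) ∂P.fst := by
        gcongr
        · rw [← ENNReal.ofReal_toReal (measure_ne_top P.fst S)]
          calc ENNReal.ofReal (2 * δ) * ENNReal.ofReal ((P.fst S).toReal)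
              = ENNReal.ofReal (2 * δ * (P.fst S).toReal) := by
                rw [← ENNReal.ofReal_mul (by linarith)]
            _ ≤ ENNReal.ofReal (2 * cM * δ ^ (1 + γ)) := by
                apply ENNReal.ofReal_le_ofReal
                have := hmargin δ hδ
                have hpow : δ ^ (1 + γ) = δ * δ ^ γ := by
                  rw [rpow_add hδ, rpow_one]
                rw [hpow]
                nlinarith [ENNReal.toReal_nonneg (a := P.fst S)]
        · apply le_of_eq
          calc ∫⁻ x, ENNReal.ofReal (2 * t2 x) ∂P.fst
              = ∫⁻ x, 2 * ENNReal.ofReal (t2 x) ∂P.fst := by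
                congr 1; funext x
                rw [ENNReal.ofReal_mul (by norm_num)]
                norm_num
            _ = 2 * ∫⁻ x, ENNReal.ofReal (t2 x) ∂P.fst :=
                lintegral_const_mul' 2 _ (by norm_num)

end
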